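/- Let λ, μ be real numbers with λ ≥ 1 and μ > 3, and let n be a natural number. Then for every z in the open unit disc 𝕌 the derivative 𝒲'_{λ,μ}(z) is nonzero and Re((𝒲_{λ,μ})'_n(z)/𝒲'_{λ,μ}(z)) ≥ (μ−1)/(μ+1). -/

import Mathlib

/-- The derivative of the normalized Wright function:
`𝒲'_{λ,μ}(z) = 1 + ∑_{m=1}^∞ (Γ(μ)(m+1)/(m! Γ(λm+μ))) z^m`. -/
noncomputable def normWrightDeriv (lam mu : ℝ) (z : ℂ) : ℂ :=
  ∑' m : ℕ,
    ((Real.Gamma mu * (m + 1) / (Nat.factorial m * Real.Gamma (lam * m + mu)) : ℝ) : ℂ) * z ^ m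

/-- The derivative of the `n`-th partial sum:
`(𝒲_{λ,μ})'_n(z) = 1 + ∑_{m=1}^n (Γ(μ)(m+1)/(m! Γ(λm+μ))) z^m`. -/
noncomputable def normWrightPartialDeriv (lam mu : ℝ) (n : ℕ) (z : ℂ) : ℂ :=
  ∑ m ∈ Finset.range (n + 1),
    ((Real.Gamma mu * (m + 1) / (Nat.factorial m * Real.Gamma (lam * m + mu)) : ℝ) : ℂ) * z ^ m


private lemma gamma_nat_add_ge (mu : ℝ) (hmu : 0 < mu) (m : ℕ) :
    mu ^ m * Real.Gamma mu ≤ Real.Gamma (m + mu) := by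
  induction m with
  | zero => simp
  | succ k ih =>
    have hk : (k : ℝ) + mu ≠ 0 := by positivity
    have hG : Real.Gamma ((k : ℝ) + mu + 1) = ((k : ℝ) + mu) * Real.Gamma ((k : ℝ) + mu) :=
      Real.Gamma_add_one hk
    have hc : ((k + 1 : ℕ) : ℝ) + mu = (k : ℝ) + mu + 1 := by push_cast; ring
    have hpos : 0 < Real.Gamma ((k : ℝ) + mu) := Real.Gamma_pos_of_pos (by positivity)
    rw [hc, hG, pow_succ]
    have hknn : (0:ℝ) ≤ (k : ℝ) := Nat.cast_nonneg k
    nlinarith [pow_pos hmu k, Real.Gamma_pos_of_pos hmu]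

private lemma coeff_nonneg (lam mu : ℝ) (hlam : 1 ≤ lam) (hmu : 3 < mu) (m : ℕ) :
    0 ≤ Real.Gamma mu * (m + 1) / (m.factorial * Real.Gamma (lam * m + mu)) := by
  have h1 : 0 < Real.Gamma mu := Real.Gamma_pos_of_pos (by linarith)
  have hm : (0:ℝ) ≤ lam * m := mul_nonneg (by linarith) (Nat.cast_nonneg m)
  have h2 : 0 < Real.Gamma (lam * m + mu) := Real.Gamma_pos_of_pos (by linarith)
  have h3 : (0:ℝ) < m.factorial := by positivity
  positivity

private lemma coeff_le (lam mu : ℝ) (hlam : 1 ≤ lam) (hmu : 3 < mu) (m : ℕ) :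
    Real.Gamma mu * (m + 1) / (m.factorial * Real.Gamma (lam * m + mu)) ≤ 2 * (1 / mu) ^ m := by
  have hmupos : (0:ℝ) < mu := by linarith
  have h1 : 0 < Real.Gamma mu := Real.Gamma_pos_of_pos hmupos
  have hmn : (0:ℝ) ≤ lam * m := mul_nonneg (by linarith) (Nat.cast_nonneg m)
  have h2 : 0 < Real.Gamma (lam * m + mu) := Real.Gamma_pos_of_pos (by linarith)
  have h3 : (0:ℝ) < m.factorial := by positivity
  -- Gamma monotone on [2, ∞)
  have hmono : Real.Gamma ((m : ℝ) + mu) ≤ Real.Gamma (lam * m + mu) := by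
    apply Real.Gamma_strictMonoOn_Ici.monotoneOn
    · simp only [Set.mem_Ici]; have := Nat.cast_nonneg (α := ℝ) m; linarith
    · simp only [Set.mem_Ici]; linarith
    · have : (m : ℝ) ≤ lam * m := by
        nlinarith [Nat.cast_nonneg (α := ℝ) m]
      linarith
  have hgam : mu ^ m * Real.Gamma mu ≤ Real.Gamma (lam * m + mu) :=
    le_trans (gamma_nat_add_ge mu hmupos m) hmono
  have hfact : ((m : ℝ) + 1) ≤ 2 * m.factorial := by
    have : m + 1 ≤ 2 * m.factorial := by
      rcases Nat.eq_zero_or_pos m with h | h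
      · subst h; simp
      · have h1' : m ≤ m.factorial := Nat.self_le_factorial m
        have : 1 ≤ m.factorial := Nat.one_le_iff_ne_zero.mpr (Nat.factorial_ne_zero m)
        omega
    exact_mod_cast this
  rw [div_le_iff₀ (by positivity)]
  have hpow : (1 / mu) ^ m = (mu ^ m)⁻¹ := by
    rw [one_div, inv_pow]
  rw [hpow]
  have hmp : (0:ℝ) < mu ^ m := pow_pos hmupos m
  rw [show (2 * (mu ^ m)⁻¹ * (↑m.factorial * Real.Gamma (lam * ↑m + mu)))
      = (2 * ↑m.factorial * Real.Gamma (lam * ↑m + mu)) / mu ^ m by ring]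
  rw [le_div_iff₀ hmp]
  nlinarith [mul_le_mul hfact hgam (by positivity) (by positivity)]

private lemma re_nonneg_of_norm (w : ℂ) (h : ‖w - 1‖ ≤ ‖w + 1‖) : 0 ≤ w.re := by
  have h1 : ‖w - 1‖ ^ 2 = (w.re - 1) ^ 2 + w.im ^ 2 := by
    rw [Complex.sq_norm]
    simp [Complex.normSq_apply, Complex.sub_re, Complex.sub_im]
    ring
  have h2 : ‖w + 1‖ ^ 2 = (w.re + 1) ^ 2 + w.im ^ 2 := by
    rw [Complex.sq_norm]
    simp [Complex.normSq_apply, Complex.add_re, Complex.add_im]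
    ring
  have h3 : ‖w - 1‖ ^ 2 ≤ ‖w + 1‖ ^ 2 := pow_le_pow_left₀ (norm_nonneg _) h 2
  nlinarith [h3, h1, h2]

set_option maxHeartbeats 1600000 in
/-- If `λ ≥ 1` and `μ > 3`, then on the open unit disc `𝒲'_{λ,μ}` is nonzero and
`Re((𝒲_{λ,μ})'_n(z)/𝒲'_{λ,μ}(z)) ≥ (μ-1)/(μ+1)`. -/
theorem re_partialDeriv_div_normWrightDeriv (lam mu : ℝ) (hlam : 1 ≤ lam) (hmu : 3 < mu)
    (n : ℕ) :
    ∀ z : ℂ, ‖z‖ < 1 →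
      normWrightDeriv lam mu z ≠ 0 ∧
      (mu - 1) / (mu + 1) ≤
        (normWrightPartialDeriv lam mu n z / normWrightDeriv lam mu z).re := by
  intro z hz
  set c : ℕ → ℝ := fun m =>
    Real.Gamma mu * (m + 1) / (m.factorial * Real.Gamma (lam * m + mu)) with hcdef
  have hcnn : ∀ m, 0 ≤ c m := fun m => coeff_nonneg lam mu hlam hmu m
  have hcle : ∀ m, c m ≤ 2 * (1 / mu) ^ m := fun m => coeff_le lam mu hlam hmu m
  have hmupos : (0:ℝ) < mu := by linarith
  have hr0 : (0:ℝ) ≤ 1 / mu := by positivity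
  have hr1 : 1 / mu < 1 := by rw [div_lt_one hmupos]; linarith
  have hgeo : Summable (fun m : ℕ => 2 * (1 / mu) ^ m) :=
    (summable_geometric_of_lt_one hr0 hr1).mul_left 2
  have hcsum : Summable c := Summable.of_nonneg_of_le hcnn hcle hgeo
  set f : ℕ → ℂ := fun m => ((c m : ℝ) : ℂ) * z ^ m with hfdef
  have hfnorm : ∀ m, ‖f m‖ ≤ c m := by
    intro m
    have h1 : ‖f m‖ = |c m| * ‖z‖ ^ m := by
      rw [hfdef]
      rw [norm_mul, norm_pow, Complex.norm_real, Real.norm_eq_abs]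
    rw [h1, abs_of_nonneg (hcnn m)]
    calc c m * ‖z‖ ^ m ≤ c m * 1 := by
          apply mul_le_mul_of_nonneg_left _ (hcnn m)
          exact pow_le_one₀ (norm_nonneg z) hz.le
      _ = c m := mul_one _
  have hfsum : Summable f := Summable.of_norm_bounded hcsum hfnorm
  have hc0 : c 0 = 1 := by
    have hG : Real.Gamma mu ≠ 0 := ne_of_gt (Real.Gamma_pos_of_pos hmupos)
    simp [hcdef]
    exact hG
  have hf0 : f 0 = 1 := by rw [hfdef]; simp [hc0]
  -- abbreviations, made opaque to avoid unification blowups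
  set W : ℂ := normWrightDeriv lam mu z with hWdef
  set P : ℂ := normWrightPartialDeriv lam mu n z with hPdef
  have hWeq : W = ∑' m, f m := rfl
  have hPeq : P = ∑ m ∈ Finset.range (n + 1), f m := rfl
  clear_value W P
  set T : ℂ := ∑' m, f (m + (n + 1)) with hTdef
  set Q : ℂ := ∑ m ∈ Finset.range n, f (m + 1) with hQdef
  set A : ℝ := ∑' m, c (m + 1) with hAdef
  set B : ℝ := ∑' m, c (m + (n + 1)) with hBdef
  have hAsum : Summable (fun m => c (m + 1)) := (summable_nat_add_iff 1).mpr hcsum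
  have hBsum : Summable (fun m => c (m + (n + 1))) := (summable_nat_add_iff (n + 1)).mpr hcsum
  clear_value T Q A B
  clear_value c f
  clear hcdef hfdef
  have hsplit : P + T = W := by
    rw [hWeq, hPeq, hTdef]
    exact Summable.sum_add_tsum_nat_add (n + 1) hfsum
  have hPQ : P = 1 + Q := by
    rw [hPeq, Finset.sum_range_succ', hf0, hQdef]
    ring
  have hAsplit : (∑ m ∈ Finset.range n, c (m + 1)) + B = A := by
    rw [hAdef, hBdef]
    have h1 : (fun m : ℕ => c (m + (n + 1))) = fun m : ℕ => c (m + n + 1) := by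
      funext m; rfl
    rw [h1]
    exact Summable.sum_add_tsum_nat_add (f := fun m => c (m + 1)) n hAsum
  have hBnn : 0 ≤ B := by
    rw [hBdef]; exact tsum_nonneg fun m => hcnn _
  have hSnn : 0 ≤ ∑ m ∈ Finset.range n, c (m + 1) :=
    Finset.sum_nonneg fun m _ => hcnn _
  have hBA : B ≤ A := by linarith
  have hAle : A ≤ 2 / (mu - 1) := by
    have hgeo' : Summable (fun m : ℕ => 2 * (1 / mu) ^ (m + 1)) :=
      (summable_nat_add_iff 1).mpr hgeo
    have h1 : A ≤ ∑' m : ℕ, 2 * (1 / mu) ^ (m + 1) := by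
      rw [hAdef]
      exact Summable.tsum_le_tsum (fun m => hcle (m + 1)) hAsum hgeo'
    have h2 : ∑' m : ℕ, 2 * (1 / mu) ^ (m + 1) = 2 * (1 / mu) * (1 - 1 / mu)⁻¹ := by
      have h3 : (fun m : ℕ => 2 * (1 / mu) ^ (m + 1)) =
          fun m : ℕ => (2 * (1 / mu)) * (1 / mu) ^ m := by
        funext m; ring
      rw [h3, tsum_mul_left, tsum_geometric_of_lt_one hr0 hr1]
    have h3 : 2 * (1 / mu) * (1 - 1 / mu)⁻¹ = 2 / (mu - 1) := by
      rw [show (1 : ℝ) - 1 / mu = (mu - 1) / mu by field_simp]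
      field_simp
    rw [h2, h3] at h1
    exact h1
  have hA2 : A * (mu - 1) ≤ 2 :=
    (le_div_iff₀ (show (0:ℝ) < mu - 1 by linarith)).mp hAle
  have hA1 : A < 1 := by
    nlinarith
  -- norm bounds
  have hTle : ‖T‖ ≤ B := by
    rw [hTdef, hBdef]
    have hs : Summable fun m => ‖f (m + (n + 1))‖ :=
      Summable.of_nonneg_of_le (fun m => norm_nonneg _) (fun m => hfnorm _) hBsum
    calc ‖∑' m, f (m + (n + 1))‖ ≤ ∑' m, ‖f (m + (n + 1))‖ := norm_tsum_le_tsum_norm hs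
      _ ≤ ∑' m, c (m + (n + 1)) := Summable.tsum_le_tsum (fun m => hfnorm _) hs hBsum
  have hQle : ‖Q‖ ≤ A - B := by
    rw [hQdef]
    calc ‖∑ m ∈ Finset.range n, f (m + 1)‖ ≤ ∑ m ∈ Finset.range n, ‖f (m + 1)‖ :=
          norm_sum_le _ _
      _ ≤ ∑ m ∈ Finset.range n, c (m + 1) := Finset.sum_le_sum fun m _ => hfnorm _
      _ = A - B := by linarith
  have hWQT : W = 1 + Q + T := by rw [← hsplit, hPQ]
  have hWlb : 1 - A ≤ ‖W‖ := by
    have h1 : ‖(1:ℂ)‖ ≤ ‖W‖ + ‖Q + T‖ := by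
      calc ‖(1:ℂ)‖ = ‖W - (Q + T)‖ := by
            have hW1 : W - (Q + T) = 1 := by rw [hWQT]; ring
            rw [hW1]
        _ ≤ ‖W‖ + ‖Q + T‖ := norm_sub_le _ _
    have h2 : ‖Q + T‖ ≤ A := by
      calc ‖Q + T‖ ≤ ‖Q‖ + ‖T‖ := norm_add_le _ _
        _ ≤ (A - B) + B := add_le_add hQle hTle
        _ = A := by ring
    simp only [norm_one] at h1
    linarith
  have hWpos : 0 < ‖W‖ := by linarith
  have hWne : W ≠ 0 := by
    intro h
    rw [h, norm_zero] at hWpos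
    exact lt_irrefl 0 hWpos
  refine ⟨hWne, ?_⟩
  -- key norm inequality
  have hkey : ‖((mu:ℂ) + 1) * T‖ ≤ ‖((mu:ℂ) + 1) * P - ((mu:ℂ) - 3) * W‖ := by
    set Y : ℂ := 4 * Q - ((mu:ℂ) - 3) * T with hYdef
    have hid : ((mu:ℂ) + 1) * P - ((mu:ℂ) - 3) * W = 4 + Y := by
      rw [hPQ, hWQT, hYdef]; ring
    have hlhs : ‖((mu:ℂ) + 1) * T‖ = (mu + 1) * ‖T‖ := by
      rw [norm_mul, show ((mu:ℂ) + 1) = ((mu + 1 : ℝ) : ℂ) by push_cast; ring,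
        Complex.norm_real, Real.norm_eq_abs, abs_of_pos (by linarith)]
    have hYle : ‖Y‖ ≤ 4 * ‖Q‖ + (mu - 3) * ‖T‖ := by
      rw [hYdef]
      calc ‖4 * Q - ((mu:ℂ) - 3) * T‖ ≤ ‖(4:ℂ) * Q‖ + ‖((mu:ℂ) - 3) * T‖ := norm_sub_le _ _
        _ = 4 * ‖Q‖ + (mu - 3) * ‖T‖ := by
            rw [norm_mul, norm_mul, show ((mu:ℂ) - 3) = ((mu - 3 : ℝ) : ℂ) by push_cast; ring,
              Complex.norm_real, Real.norm_eq_abs, abs_of_pos (by linarith)]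
            norm_num
    have h4Y : ‖(4:ℂ)‖ ≤ ‖4 + Y‖ + ‖Y‖ := by
      calc ‖(4:ℂ)‖ = ‖(4 + Y) - Y‖ := by congr 1; ring
        _ ≤ ‖4 + Y‖ + ‖Y‖ := norm_sub_le _ _
    have h4 : ‖(4:ℂ)‖ = 4 := by norm_num
    rw [hid, hlhs]
    have e1 : (mu + 1) * ‖T‖ ≤ (mu + 1) * B := by
      apply mul_le_mul_of_nonneg_left hTle (by linarith)
    have e2 : (mu - 3) * ‖T‖ ≤ (mu - 3) * B := by
      apply mul_le_mul_of_nonneg_left hTle (by linarith)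
    have e3 : 4 * ‖Q‖ ≤ 4 * (A - B) := by linarith
    nlinarith [hA2, hBA, hBnn, norm_nonneg T, norm_nonneg Q, norm_nonneg Y]
  -- define w
  set w : ℂ := (((mu:ℂ) + 1) * P - ((mu:ℂ) - 1) * W) / (2 * W) with hwdef
  have h2Wne : (2 : ℂ) * W ≠ 0 := mul_ne_zero two_ne_zero hWne
  have hw1 : w - 1 = (-(((mu:ℂ) + 1) * T)) / (2 * W) := by
    rw [hwdef, eq_div_iff h2Wne, sub_mul, div_mul_cancel₀ _ h2Wne,
      show T = W - P by rw [← hsplit]; ring]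
    ring
  have hw2 : w + 1 = (((mu:ℂ) + 1) * P - ((mu:ℂ) - 3) * W) / (2 * W) := by
    rw [hwdef, eq_div_iff h2Wne, add_mul, div_mul_cancel₀ _ h2Wne]
    ring
  clear_value w
  have h2W : 0 < ‖(2:ℂ) * W‖ := by
    rw [norm_mul]
    have : ‖(2:ℂ)‖ = 2 := by norm_num
    rw [this]; linarith
  have hwnorm : ‖w - 1‖ ≤ ‖w + 1‖ := by
    rw [hw1, hw2, norm_div, norm_div, norm_neg]
    rw [div_le_div_iff₀ h2W h2W]
    nlinarith [hkey, norm_nonneg (((mu:ℂ) + 1) * T)]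
  have hwre : 0 ≤ w.re := re_nonneg_of_norm w hwnorm
  have hmu1 : ((mu:ℂ) + 1) ≠ 0 := by
    rw [show ((mu:ℂ) + 1) = ((mu + 1 : ℝ) : ℂ) by push_cast; ring]
    exact Complex.ofReal_ne_zero.mpr (by linarith)
  have hPW : P / W = (2 * w + ((mu:ℂ) - 1)) / ((mu:ℂ) + 1) := by
    rw [hwdef]
    field_simp
    ring
  rw [hPW]
  rw [show ((mu:ℂ) + 1) = ((mu + 1 : ℝ) : ℂ) by push_cast; ring, Complex.div_ofReal_re]
  have hre : (2 * w + ((mu:ℂ) - 1)).re = 2 * w.re + (mu - 1) := by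
    simp [Complex.add_re, Complex.mul_re, Complex.sub_re]
  rw [hre]
  rw [div_le_div_iff₀ (by linarith : (0:ℝ) < mu + 1) (by linarith : (0:ℝ) < mu + 1)]
  nlinarith [hwre]
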